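/- arXiv:2503.11104 — 4 statements merged into one kernel-verified Lean document; each statement's English description precedes it below -/
import Mathlib

section
/- Let W be a real symmetric m×m matrix with -I ≺ W ⪯ I and null(I - W) = span{1_m}, and let V = θI + (1-θ)W with θ ∈ (0, 1/2]. Define the 2m×2m matrix P = [[W - (1/m)1 1ᵀ, I_m], [W - V, I_m - (1/m)1 1ᵀ]]. Then every eigenvalue λ of P satisfies |λ| < 1. -/
open Matrix Polynomial


-- quadratic root lemma
lemma quad_root_abs_lt_one (θ μ : ℝ) (hθ0 : 0 < θ) (hθ1 : θ ≤ 1/2)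
    (hμ1 : μ < 1) (hμ2 : -1 < μ) (lam : ℂ)
    (h : lam ^ 2 - ((1 + μ : ℝ) : ℂ) * lam + ((μ + θ * (1 - μ) : ℝ) : ℂ) = 0) :
    ‖lam‖ < 1 := by
  set a := lam.re with ha
  set b := lam.im with hb
  have hre : a ^ 2 - b ^ 2 - (1 + μ) * a + (μ + θ * (1 - μ)) = 0 := by
    have := congrArg Complex.re h
    simp [pow_two, Complex.mul_re, Complex.mul_im, Complex.add_re, Complex.sub_re] at this
    ring_nf at this ⊢
    linarith [this]
  have him : b * (2 * a - (1 + μ)) = 0 := by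
    have := congrArg Complex.im h
    simp [pow_two, Complex.mul_re, Complex.mul_im] at this
    ring_nf at this ⊢
    linarith [this]
  have habs : ‖lam‖ ^ 2 = a ^ 2 + b ^ 2 := by
    rw [Complex.sq_norm, Complex.normSq_apply]; ring
  have key : a ^ 2 + b ^ 2 < 1 := by
    rcases mul_eq_zero.mp him with hb0 | hc
    · -- b = 0
      rw [hb0]
      have heq : a ^ 2 - (1 + μ) * a + (μ + θ * (1 - μ)) = 0 := by
        rw [hb0] at hre; linarith [hre]
      have hd1 : μ + θ * (1 - μ) < 1 := by nlinarith
      have h1 : a < 1 := by nlinarith [mul_pos hθ0 (by linarith : (0:ℝ) < 1 - μ)]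
      have h2 : -1 < a := by nlinarith
      nlinarith
    · -- a = (1+μ)/2
      have haa : a = (1 + μ) / 2 := by linarith
      have : b ^ 2 = (μ + θ * (1 - μ)) - a ^ 2 := by rw [haa] at hre; nlinarith [hre]
      have hd1 : μ + θ * (1 - μ) < 1 := by nlinarith
      linarith
  have h0 : 0 ≤ ‖lam‖ := norm_nonneg lam
  nlinarith [key, habs]

-- PSD kernel lemma
lemma psd_mulVec_eq_zero {n : ℕ} {M : Matrix (Fin n) (Fin n) ℝ} (hM : M.PosSemidef)
    (x : Fin n → ℝ) (h : x ⬝ᵥ (M *ᵥ x) = 0) : M *ᵥ x = 0 := by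
  exact (hM.dotProduct_mulVec_zero_iff x).mp (by rwa [star_trivial])


lemma exists_eigenvector {n : ℕ} (M : Matrix (Fin n) (Fin n) ℂ) (lam : ℂ)
    (h : M.charpoly.IsRoot lam) : ∃ v : Fin n → ℂ, v ≠ 0 ∧ M *ᵥ v = lam • v := by
  have hdet : (lam • (1 : Matrix (Fin n) (Fin n) ℂ) - M).det = 0 := by
    have hmap : (charmatrix M).map (Polynomial.evalRingHom lam) =
        lam • (1 : Matrix (Fin n) (Fin n) ℂ) - M := by
      ext i j
      by_cases hij : i = j <;>
        simp [hij, charmatrix_apply, Matrix.one_apply, diagonal_apply]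
    have h2 := RingHom.map_det (Polynomial.evalRingHom lam) (charmatrix M)
    rw [RingHom.mapMatrix_apply, hmap] at h2
    rw [← h2]
    simpa [Matrix.charpoly] using h
  obtain ⟨v, hv, hMv⟩ := Matrix.exists_mulVec_eq_zero_iff.mpr hdet
  refine ⟨v, hv, ?_⟩
  rw [sub_mulVec, smul_mulVec, one_mulVec, sub_eq_zero] at hMv
  exact hMv.symm


/-- Lemma 1: every eigenvalue of the EXTRA consensus-error matrix P has magnitude < 1. -/
theorem stmt_3 {m : ℕ} (hm : 0 < m) (W : Matrix (Fin m) (Fin m) ℝ) (θ : ℝ)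
    (hW : W.IsSymm)
    (hlow : (W + 1).PosDef) (hup : ((1 : Matrix (Fin m) (Fin m) ℝ) - W).PosSemidef)
    (hnull : ∀ v : Fin m → ℝ, ((1 : Matrix (Fin m) (Fin m) ℝ) - W) *ᵥ v = 0 ↔
      ∃ c : ℝ, v = fun _ => c)
    (hθ0 : 0 < θ) (hθ1 : θ ≤ 1/2)
    (V : Matrix (Fin m) (Fin m) ℝ)
    (hV : V = θ • (1 : Matrix (Fin m) (Fin m) ℝ) + (1 - θ) • W)
    (P : Matrix (Fin (m + m)) (Fin (m + m)) ℝ)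
    (hP : P = Matrix.reindex finSumFinEquiv finSumFinEquiv
      (Matrix.fromBlocks
        (W - (m : ℝ)⁻¹ • Matrix.of (fun _ _ => (1 : ℝ))) 1
        (W - V) (1 - (m : ℝ)⁻¹ • Matrix.of (fun _ _ => (1 : ℝ)))))
    (lam : ℂ) (hlam : (P.map (algebraMap ℝ ℂ)).charpoly.IsRoot lam) :
    ‖lam‖ < 1 := by
  by_contra habs
  push_neg at habs
  have hlamne : lam ≠ 0 := by
    intro h0
    rw [h0] at habs
    simp at habs
    linarith
  -- basic facts about W
  have hWsym : ∀ i j, W i j = W j i := by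
    intro i j
    conv_lhs => rw [← hW]
    rfl
  have hW1 : W *ᵥ (fun _ => (1:ℝ)) = fun _ => (1:ℝ) := by
    have := (hnull (fun _ => (1:ℝ))).mpr ⟨1, rfl⟩
    rw [sub_mulVec, one_mulVec, sub_eq_zero] at this
    exact this.symm
  have hrow : ∀ i, ∑ j, W i j = 1 := by
    intro i
    have := congrFun hW1 i
    simpa [mulVec, dotProduct] using this
  have hcol : ∀ j, ∑ i, W i j = 1 := by
    intro j
    rw [show (∑ i, W i j) = ∑ i, W j i from Finset.sum_congr rfl fun i _ => hWsym i j]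
    exact hrow j
  -- eigenvector
  obtain ⟨v, hvne, hv⟩ := exists_eigenvector _ lam hlam
  set f := algebraMap ℝ ℂ with hf
  set e := finSumFinEquiv (m := m) (n := m) with he
  set Wc : Matrix (Fin m) (Fin m) ℂ := W.map f with hWc
  set Jc : Matrix (Fin m) (Fin m) ℂ := Matrix.of (fun _ _ => (1:ℂ)) with hJc
  set w : Fin m ⊕ Fin m → ℂ := v ∘ e with hw
  have hwne : w ≠ 0 := by
    intro h0
    apply hvne
    funext i
    have := congrFun h0 (e.symm i)
    simpa [hw] using this
  set x : Fin m → ℂ := w ∘ Sum.inl with hx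
  set y : Fin m → ℂ := w ∘ Sum.inr with hy
  -- block equation
  have hblock : (Matrix.fromBlocks (Wc - (m : ℂ)⁻¹ • Jc) 1
      ((-θ : ℝ) • ((1 : Matrix (Fin m) (Fin m) ℂ) - Wc)) (1 - (m : ℂ)⁻¹ • Jc)) *ᵥ w
      = lam • w := by
    have hA1 : (W - (m : ℝ)⁻¹ • Matrix.of (fun _ _ => (1:ℝ))).map f
        = Wc - (m : ℂ)⁻¹ • Jc := by
      ext i j
      simp [hWc, hJc, hf, Matrix.map_apply, Matrix.sub_apply, Matrix.smul_apply]
      try push_cast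
      try ring
    have hA2 : ((1 : Matrix (Fin m) (Fin m) ℝ)).map f = 1 := by
      ext i j
      by_cases hij : i = j <;> simp [hij, Matrix.one_apply, hf]
    have hA3 : (W - V).map f = (-θ : ℝ) • ((1 : Matrix (Fin m) (Fin m) ℂ) - Wc) := by
      rw [hV]
      ext i j
      by_cases hij : i = j <;>
        · simp [hij, hWc, hf, Matrix.map_apply, Matrix.sub_apply, Matrix.add_apply,
            Matrix.smul_apply, Matrix.one_apply, Complex.real_smul]
          try push_cast
          try ring
    have hA4 : ((1 : Matrix (Fin m) (Fin m) ℝ) - (m : ℝ)⁻¹ • Matrix.of (fun _ _ => (1:ℝ))).map f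
        = 1 - (m : ℂ)⁻¹ • Jc := by
      ext i j
      by_cases hij : i = j <;>
        · simp [hij, hJc, hf, Matrix.map_apply, Matrix.sub_apply, Matrix.smul_apply,
            Matrix.one_apply]
          try push_cast
          try ring
    have hPmap : P.map f = (Matrix.fromBlocks (Wc - (m : ℂ)⁻¹ • Jc) 1
        ((-θ : ℝ) • ((1 : Matrix (Fin m) (Fin m) ℂ) - Wc)) (1 - (m : ℂ)⁻¹ • Jc)).submatrix
          e.symm e.symm := by
      rw [hP, reindex_apply, ← submatrix_map, fromBlocks_map, hA1, hA2, hA3, hA4]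
    rw [hPmap] at hv
    rw [submatrix_mulVec_equiv] at hv
    funext s
    have := congrFun hv (e s)
    simpa [hw] using this
  have eq1 : (Wc - (m : ℂ)⁻¹ • Jc) *ᵥ x + y = lam • x := by
    have := congrFun hblock
    funext i
    have h1 := this (Sum.inl i)
    rw [fromBlocks_mulVec] at h1
    simpa [hx, hy, hw] using h1
  have eq2 : ((-θ : ℝ) • ((1 : Matrix (Fin m) (Fin m) ℂ) - Wc)) *ᵥ x
      + (1 - (m : ℂ)⁻¹ • Jc) *ᵥ y = lam • y := by
    have := congrFun hblock
    funext i
    have h1 := this (Sum.inr i)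
    rw [fromBlocks_mulVec] at h1
    simpa [hx, hy, hw] using h1
  -- sums
  have hmc : (m : ℂ) ≠ 0 := Nat.cast_ne_zero.mpr hm.ne'
  set Sx : ℂ := ∑ i, x i with hSx
  set Sy : ℂ := ∑ i, y i with hSy
  have hWf : ∀ i j, Wc i j = ((W i j : ℝ) : ℂ) := by
    intro i j; simp [hWc, hf, Matrix.map_apply]
  have hsumW : ∀ z : Fin m → ℂ, ∑ i, (Wc *ᵥ z) i = ∑ i, z i := by
    intro z
    have h1 : ∀ i, (Wc *ᵥ z) i = ∑ j, ((W i j : ℝ) : ℂ) * z j := by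
      intro i; simp [mulVec, dotProduct, hWf]
    rw [Finset.sum_congr rfl fun i _ => h1 i, Finset.sum_comm]
    refine Finset.sum_congr rfl fun j _ => ?_
    rw [← Finset.sum_mul, ← Complex.ofReal_sum, hcol j]
    simp
  have hsumJ : ∀ z : Fin m → ℂ, ∑ i, (Jc *ᵥ z) i = (m : ℂ) * ∑ i, z i := by
    intro z
    have h1 : ∀ i : Fin m, (Jc *ᵥ z) i = ∑ j, z j := by
      intro i; simp [hJc, mulVec, dotProduct]
    rw [Finset.sum_congr rfl fun i _ => h1 i, Finset.sum_const, Finset.card_univ,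
      Fintype.card_fin, nsmul_eq_mul]
  have eq1' : Wc *ᵥ x - (m : ℂ)⁻¹ • (Jc *ᵥ x) + y = lam • x := by
    rw [← smul_mulVec, ← sub_mulVec]; exact eq1
  have hs1 : Sx - Sx + Sy = lam * Sx := by
    have := congrArg (fun z => ∑ i, z i) eq1'
    simp only [Pi.add_apply, Pi.sub_apply, Pi.smul_apply, smul_eq_mul] at this
    rw [Finset.sum_add_distrib, Finset.sum_sub_distrib, ← Finset.mul_sum] at this
    rw [hsumW x, hsumJ x, ← mul_assoc, inv_mul_cancel₀ hmc, one_mul] at this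
    rw [← Finset.mul_sum] at this
    exact this
  have hSyx : Sy = lam * Sx := by rw [← hs1]; ring
  have eq2' : (-θ : ℝ) • ((1 : Matrix (Fin m) (Fin m) ℂ) - Wc) *ᵥ x
      + (y - (m : ℂ)⁻¹ • (Jc *ᵥ y)) = lam • y := by
    have h2 : ((1 : Matrix (Fin m) (Fin m) ℂ) - (m : ℂ)⁻¹ • Jc) *ᵥ y
        = y - (m : ℂ)⁻¹ • (Jc *ᵥ y) := by
      rw [sub_mulVec, one_mulVec, smul_mulVec]
    rw [← h2]
    simpa [smul_mulVec, neg_mulVec] using eq2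
  have hs2 : lam * Sy = 0 := by
    have := congrArg (fun z => ∑ i, z i) eq2'
    simp only [Pi.add_apply, Pi.sub_apply, Pi.smul_apply, smul_eq_mul] at this
    rw [Finset.sum_add_distrib, Finset.sum_sub_distrib, ← Finset.mul_sum, hsumJ y,
      ← mul_assoc, inv_mul_cancel₀ hmc, one_mul, ← Finset.mul_sum] at this
    have hsub : ∑ i, (((1 : Matrix (Fin m) (Fin m) ℂ) - Wc) *ᵥ x) i = 0 := by
      have : ((1 : Matrix (Fin m) (Fin m) ℂ) - Wc) *ᵥ x = x - Wc *ᵥ x := by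
        rw [sub_mulVec, one_mulVec]
      rw [this]
      simp only [Pi.sub_apply]
      rw [Finset.sum_sub_distrib, hsumW x, sub_self]
    rw [← Finset.smul_sum, hsub, smul_zero] at this
    rw [← this]; ring
  have hSy0 : Sy = 0 := by
    rcases mul_eq_zero.mp hs2 with h | h
    · exact absurd h hlamne
    · exact h
  have hSx0 : Sx = 0 := by
    rw [hSy0] at hSyx
    rcases mul_eq_zero.mp hSyx.symm with h | h
    · exact absurd h hlamne
    · exact h
  have hJx : Jc *ᵥ x = 0 := by
    funext i
    simp only [hJc, mulVec, dotProduct, of_apply, one_mul, Pi.zero_apply]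
    exact hSx0
  have hJy : Jc *ᵥ y = 0 := by
    funext i
    simp only [hJc, mulVec, dotProduct, of_apply, one_mul, Pi.zero_apply]
    exact hSy0
  have eq1'' : Wc *ᵥ x + y = lam • x := by
    rw [← eq1']; rw [hJx]; simp
  have eq2'' : (-θ : ℝ) • (x - Wc *ᵥ x) + y = lam • y := by
    rw [← eq2']; rw [hJy]
    simp [smul_mulVec, sub_mulVec, one_mulVec]
  have hxne : x ≠ 0 := by
    intro h0
    apply hwne
    have hy0 : y = 0 := by
      have := eq1''
      rw [h0] at this
      simpa using this
    funext s
    cases s with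
    | inl i => exact congrFun h0 i
    | inr i => exact congrFun hy0 i
  have hy_eq : y = lam • x - Wc *ᵥ x := by
    rw [← eq1'']; abel
  have veq : (-θ : ℝ) • (x - Wc *ᵥ x) + (lam • x - Wc *ᵥ x)
      = lam • (lam • x - Wc *ᵥ x) := by
    rw [← hy_eq]; exact eq2''
  set N : ℂ := star x ⬝ᵥ x with hNdef
  set Q : ℂ := star x ⬝ᵥ (Wc *ᵥ x) with hQdef
  have seq : -(θ : ℂ) * (N - Q) + (lam * N - Q) = lam * (lam * N - Q) := by
    have := congrArg (fun z => star x ⬝ᵥ z) veq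
    simp only [dotProduct_add, dotProduct_sub, dotProduct_smul, smul_eq_mul,
      Complex.real_smul, Complex.ofReal_neg] at this
    convert this using 2 <;> ring
  -- real and imaginary parts
  set a : Fin m → ℝ := fun i => (x i).re with hadef
  set b : Fin m → ℝ := fun i => (x i).im with hbdef
  have hWre : ∀ i, ((Wc *ᵥ x) i).re = (W *ᵥ a) i := by
    intro i
    simp [mulVec, dotProduct, hWf, Complex.re_sum, Complex.mul_re, hadef]
  have hWim : ∀ i, ((Wc *ᵥ x) i).im = (W *ᵥ b) i := by
    intro i
    simp [mulVec, dotProduct, hWf, Complex.im_sum, Complex.mul_im, hbdef]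
  set n0 : ℝ := a ⬝ᵥ a + b ⬝ᵥ b with hn0def
  set q : ℝ := a ⬝ᵥ (W *ᵥ a) + b ⬝ᵥ (W *ᵥ b) with hqdef
  have hsymdot : a ⬝ᵥ (W *ᵥ b) = b ⬝ᵥ (W *ᵥ a) := by
    rw [dotProduct_mulVec, ← hW, vecMul_transpose, dotProduct_comm, hW]
  have hN : N = (n0 : ℂ) := by
    apply Complex.ext
    · simp [hNdef, dotProduct, Complex.re_sum, Complex.mul_re, hn0def, hadef, hbdef,
        Finset.sum_add_distrib]
    · simp [hNdef, dotProduct, Complex.im_sum, Complex.mul_im, mul_comm]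
  have hQ : Q = (q : ℂ) := by
    apply Complex.ext
    · have hrecomp : ∀ i, ((star x) i * (Wc *ᵥ x) i).re
          = (x i).re * (W *ᵥ a) i + (x i).im * (W *ᵥ b) i := by
        intro i
        simp [Complex.mul_re, hWre i, hWim i]
      simp only [hQdef, dotProduct, Complex.re_sum]
      rw [Finset.sum_congr rfl fun i _ => hrecomp i, hqdef]
      simp only [dotProduct]
      rw [← Finset.sum_add_distrib]
      rfl
    · have himcomp : ∀ i, ((star x) i * (Wc *ᵥ x) i).im
          = (x i).re * (W *ᵥ b) i - (x i).im * (W *ᵥ a) i := by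
        intro i
        simp [Complex.mul_im, hWre i, hWim i]
        ring
      simp only [hQdef, dotProduct, Complex.im_sum, Complex.ofReal_im]
      rw [Finset.sum_congr rfl fun i _ => himcomp i, Finset.sum_sub_distrib]
      have h1 : ∑ i, (x i).re * (W *ᵥ b) i = a ⬝ᵥ (W *ᵥ b) := rfl
      have h2 : ∑ i, (x i).im * (W *ᵥ a) i = b ⬝ᵥ (W *ᵥ a) := rfl
      rw [h1, h2, hsymdot, sub_self]
  -- positivity facts
  have hab_ne : a ≠ 0 ∨ b ≠ 0 := by
    by_contra hcon
    push_neg at hcon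
    apply hxne
    funext i
    have h1 := congrFun hcon.1 i
    have h2 := congrFun hcon.2 i
    simp [hadef, hbdef] at h1 h2
    exact Complex.ext h1 h2
  have hdsnn : ∀ z : Fin m → ℝ, 0 ≤ z ⬝ᵥ z := fun z =>
    Finset.sum_nonneg fun i _ => mul_self_nonneg (z i)
  have hn0pos : 0 < n0 := by
    rcases hab_ne with hz | hz
    · have : 0 < a ⬝ᵥ a := lt_of_le_of_ne (hdsnn a) (fun h => hz (dotProduct_self_eq_zero.mp h.symm))
      have := hdsnn b
      rw [hn0def]; linarith
    · have : 0 < b ⬝ᵥ b := lt_of_le_of_ne (hdsnn b) (fun h => hz (dotProduct_self_eq_zero.mp h.symm))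
      have := hdsnn a
      rw [hn0def]; linarith
  have hposform : ∀ z : Fin m → ℝ, z ≠ 0 → 0 < z ⬝ᵥ (W *ᵥ z) + z ⬝ᵥ z := by
    intro z hz
    have := hlow.dotProduct_mulVec_pos hz
    rw [star_trivial, add_mulVec, one_mulVec, dotProduct_add] at this
    linarith
  have hngt : -n0 < q := by
    rcases hab_ne with hz | hz
    · have h1 := hposform a hz
      have h2 : 0 ≤ b ⬝ᵥ (W *ᵥ b) + b ⬝ᵥ b := by
        by_cases hb0 : b = 0
        · simp [hb0]
        · linarith [hposform b hb0]
      rw [hn0def, hqdef]; linarith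
    · have h1 := hposform b hz
      have h2 : 0 ≤ a ⬝ᵥ (W *ᵥ a) + a ⬝ᵥ a := by
        by_cases ha0 : a = 0
        · simp [ha0]
        · linarith [hposform a ha0]
      rw [hn0def, hqdef]; linarith
  have hsemiform : ∀ z : Fin m → ℝ, 0 ≤ z ⬝ᵥ z - z ⬝ᵥ (W *ᵥ z) := by
    intro z
    have := hup.dotProduct_mulVec_nonneg z
    rw [star_trivial, sub_mulVec, one_mulVec, dotProduct_sub] at this
    linarith
  have hqlt : q < n0 := by
    rcases lt_or_eq_of_le (by linarith [hsemiform a, hsemiform b] :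
        q ≤ n0) with h | h
    · exact h
    · exfalso
      have hra : a ⬝ᵥ ((1 - W) *ᵥ a) = 0 := by
        rw [sub_mulVec, one_mulVec, dotProduct_sub]
        have := hsemiform a
        have := hsemiform b
        rw [hn0def, hqdef] at h
        linarith
      have hrb : b ⬝ᵥ ((1 - W) *ᵥ b) = 0 := by
        rw [sub_mulVec, one_mulVec, dotProduct_sub]
        have := hsemiform a
        have := hsemiform b
        rw [hn0def, hqdef] at h
        linarith
      obtain ⟨c, hc⟩ := (hnull a).mp (psd_mulVec_eq_zero hup a hra)
      obtain ⟨c', hc'⟩ := (hnull b).mp (psd_mulVec_eq_zero hup b hrb)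
      have hSxre : (Sx).re = ∑ i, a i := by
        simp [hSx, Complex.re_sum, hadef]
      have hSxim : (Sx).im = ∑ i, b i := by
        simp [hSx, Complex.im_sum, hbdef]
      have hc0 : c = 0 := by
        have : (0:ℝ) = ∑ i : Fin m, a i := by rw [← hSxre, hSx0]; simp
        rw [hc] at this
        simp [Finset.sum_const, Finset.card_univ] at this
        rcases this with h | h
        · exact absurd h hm.ne'
        · exact h
      have hc'0 : c' = 0 := by
        have : (0:ℝ) = ∑ i : Fin m, b i := by rw [← hSxim, hSx0]; simp
        rw [hc'] at this
        simp [Finset.sum_const, Finset.card_univ] at this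
        rcases this with h | h
        · exact absurd h hm.ne'
        · exact h
      apply hxne
      funext i
      have h1 : a i = 0 := by rw [hc, hc0]
      have h2 : b i = 0 := by rw [hc', hc'0]
      simp [hadef, hbdef] at h1 h2
      exact Complex.ext h1 h2
  -- the quadratic
  set μ : ℝ := q / n0 with hμdef
  have hμ1 : μ < 1 := (div_lt_one hn0pos).mpr hqlt
  have hμ2 : -1 < μ := by
    rw [hμdef, lt_div_iff₀ hn0pos]
    linarith
  have hn0c : (n0 : ℂ) ≠ 0 := by
    simp [Complex.ofReal_ne_zero]
    linarith
  have hqc : (q : ℂ) = (μ : ℂ) * (n0 : ℂ) := by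
    have : μ * n0 = q := div_mul_cancel₀ q hn0pos.ne'
    rw [← this]
    push_cast
    ring
  have key : (lam ^ 2 - ((1 + μ : ℝ) : ℂ) * lam + ((μ + θ * (1 - μ) : ℝ) : ℂ)) * (n0 : ℂ)
      = 0 := by
    rw [hN, hQ] at seq
    push_cast
    linear_combination (-1 : ℂ) * seq + (lam + (θ:ℂ) - 1) * hqc
  have hroot : lam ^ 2 - ((1 + μ : ℝ) : ℂ) * lam + ((μ + θ * (1 - μ) : ℝ) : ℂ) = 0 := by
    rcases mul_eq_zero.mp key with h | h
    · exact h
    · exact absurd h hn0c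
  have := quad_root_abs_lt_one θ μ hθ0 hθ1 hμ1 hμ2 lam hroot
  linarith
end

section
/- Let W be a real symmetric m×m matrix with null(I - W) = span{1_m}, and let V = θI + (1-θ)W with θ ∈ (0, 1/2]. If v = [v₁ᵀ, v₂ᵀ]ᵀ ∈ R^{2m} satisfies [[W, I],[W - V, I]] v = v, then v₁ ∈ span{1_m} and v₂ = 0. -/
open Matrix

/-- The eigenspace of the eigenvalue 1 of the EXTRA block matrix M = [[W,I],[W-V,I]]. -/
theorem stmt_4 {m : ℕ} (W : Matrix (Fin m) (Fin m) ℝ) (θ : ℝ)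
    (hW : W.IsSymm)
    (hnull : ∀ v : Fin m → ℝ, ((1 : Matrix (Fin m) (Fin m) ℝ) - W) *ᵥ v = 0 ↔
      ∃ c : ℝ, v = fun _ => c)
    (hθ0 : 0 < θ) (hθ1 : θ ≤ 1/2)
    (V : Matrix (Fin m) (Fin m) ℝ)
    (hV : V = θ • (1 : Matrix (Fin m) (Fin m) ℝ) + (1 - θ) • W)
    (v₁ v₂ : Fin m → ℝ)
    (h1 : W *ᵥ v₁ + v₂ = v₁)
    (h2 : (W - V) *ᵥ v₁ + v₂ = v₂) :
    (∃ c : ℝ, v₁ = fun _ => c) ∧ v₂ = 0 := by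
  have hWV : W - V = (-θ) • ((1 : Matrix (Fin m) (Fin m) ℝ) - W) := by
    rw [hV]; ext i j
    simp [Matrix.sub_apply, Matrix.add_apply, Matrix.smul_apply]; ring
  have hz : (W - V) *ᵥ v₁ = 0 := add_eq_right.mp h2
  have hnz : ((1 : Matrix (Fin m) (Fin m) ℝ) - W) *ᵥ v₁ = 0 := by
    rw [hWV, Matrix.smul_mulVec] at hz
    rcases smul_eq_zero.mp hz with h | h
    · exact absurd (neg_eq_zero.mp h) (ne_of_gt hθ0)
    · exact h
  refine ⟨(hnull v₁).mp hnz, ?_⟩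
  have hv2 : v₂ = v₁ - W *ᵥ v₁ := by rw [eq_sub_iff_add_eq, add_comm]; exact h1
  rwa [Matrix.sub_mulVec, Matrix.one_mulVec, ← hv2] at hnz
end

section
/- Let G : R^N → R be differentiable with L-Lipschitz gradient, let 0 < α ≤ 1/L, and let x⁺ = x - α∇G(x) - αΔ where Δ ∈ R^N satisfies ‖Δ‖ ≤ L·e for some e ≥ 0. Then G(x⁺) - G(x) ≤ -(α/4)‖∇G(x)‖² + ((L³α²)/2 + L²α) e². -/
open RealInnerProductSpace

lemma descent_lemma {N : ℕ} (G : EuclideanSpace ℝ (Fin N) → ℝ) (L : ℝ) (hL : 0 ≤ L)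
    (hdiff : Differentiable ℝ G)
    (hlip : ∀ x y, ‖gradient G x - gradient G y‖ ≤ L * ‖x - y‖)
    (x v : EuclideanSpace ℝ (Fin N)) :
    G (x + v) ≤ G x + ⟪gradient G x, v⟫ + L / 2 * ‖v‖ ^ 2 := by
  set g := gradient G x with hg
  set ψ : ℝ → ℝ := fun t => G (x + t • v) - t * ⟪g, v⟫ - t ^ 2 * (L / 2 * ‖v‖ ^ 2) with hψdef
  have hline : ∀ t : ℝ, HasDerivAt (fun t : ℝ => x + t • v) v t := by
    intro t
    simpa using ((hasDerivAt_id t).smul_const v).const_add x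
  have hφ : ∀ t : ℝ, HasDerivAt (fun t => G (x + t • v))
      ⟪gradient G (x + t • v), v⟫ t := by
    intro t
    have h1 := ((hdiff (x + t • v)).hasGradientAt).hasFDerivAt.comp_hasDerivAt t (hline t)
    simpa [InnerProductSpace.toDual_apply_apply, Function.comp_def] using h1
  have hψ : ∀ t : ℝ, HasDerivAt ψ
      (⟪gradient G (x + t • v), v⟫ - ⟪g, v⟫ - 2 * t * (L / 2 * ‖v‖ ^ 2)) t := by
    intro t
    have h2 : HasDerivAt (fun t : ℝ => t * ⟪g, v⟫) ⟪g, v⟫ t := by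
      simpa using (hasDerivAt_id t).mul_const (⟪g, v⟫)
    have h3 : HasDerivAt (fun t : ℝ => t ^ 2 * (L / 2 * ‖v‖ ^ 2)) (2 * t * (L / 2 * ‖v‖ ^ 2)) t := by
      simpa using ((hasDerivAt_pow 2 t).mul_const (L / 2 * ‖v‖ ^ 2))
    exact ((hφ t).sub h2).sub h3
  have hanti : AntitoneOn ψ (Set.Icc (0:ℝ) 1) := by
    apply antitoneOn_of_deriv_nonpos (convex_Icc 0 1)
    · exact fun t _ => ((hψ t).continuousAt).continuousWithinAt
    · exact fun t _ => ((hψ t).differentiableAt).differentiableWithinAt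
    · intro t ht
      rw [interior_Icc] at ht
      rw [(hψ t).deriv]
      have hb : ⟪gradient G (x + t • v) - g, v⟫ ≤ L * t * ‖v‖ ^ 2 := by
        calc ⟪gradient G (x + t • v) - g, v⟫ ≤ ‖gradient G (x + t • v) - g‖ * ‖v‖ :=
              real_inner_le_norm _ _
          _ ≤ (L * ‖(x + t • v) - x‖) * ‖v‖ := by
              have := hlip (x + t • v) x
              exact mul_le_mul_of_nonneg_right this (norm_nonneg v)
          _ = L * t * ‖v‖ ^ 2 := by
              rw [show (x + t • v) - x = t • v by abel, norm_smul]
              simp [abs_of_nonneg ht.1.le]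
              ring
      have := inner_sub_left (𝕜 := ℝ) (gradient G (x + t • v)) g v
      nlinarith [this]
  have h01 := hanti (Set.left_mem_Icc.2 zero_le_one) (Set.right_mem_Icc.2 zero_le_one) zero_le_one
  simp only [hψdef] at h01
  simp only [one_smul, zero_smul, add_zero, one_pow, one_mul, zero_mul, zero_pow, sub_zero] at h01
  linarith [h01]

/-- Inexact gradient-descent decrease lemma for the averaged EXTRA iterate. -/
theorem stmt_9 {N : ℕ} (G : EuclideanSpace ℝ (Fin N) → ℝ) (L α e : ℝ)
    (hL : 0 < L) (hdiff : Differentiable ℝ G)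
    (hlip : ∀ x y, ‖gradient G x - gradient G y‖ ≤ L * ‖x - y‖)
    (hα0 : 0 < α) (hα1 : α ≤ 1 / L) (he : 0 ≤ e)
    (x : EuclideanSpace ℝ (Fin N)) (Δ : EuclideanSpace ℝ (Fin N))
    (hΔ : ‖Δ‖ ≤ L * e) :
    G (x - α • gradient G x - α • Δ) - G x ≤
      -(α / 4) * ‖gradient G x‖^2 + ((L^3 * α^2) / 2 + L^2 * α) * e^2 := by
  set g := gradient G x with hg
  set v : EuclideanSpace ℝ (Fin N) := -(α • (g + Δ)) with hv
  have hxv : x - α • g - α • Δ = x + v := by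
    simp only [hv, smul_add]; abel
  have hd := descent_lemma G L hL.le hdiff hlip x v
  rw [hxv]
  have hiv : ⟪g, v⟫ = -α * (‖g‖ ^ 2 + ⟪g, Δ⟫) := by
    rw [hv, inner_neg_right, inner_smul_right, inner_add_right,
      real_inner_self_eq_norm_sq]
    ring
  have hnv : ‖v‖ ^ 2 = α ^ 2 * (‖g‖ ^ 2 + 2 * ⟪g, Δ⟫ + ‖Δ‖ ^ 2) := by
    rw [hv, norm_neg, norm_smul, mul_pow, ← @norm_add_sq_real]
    simp [abs_of_nonneg hα0.le]
  rw [show (inner ℝ (gradient G x) v : ℝ) = ⟪g, v⟫ from rfl, hiv, hnv] at hd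
  have hLα : L * α ≤ 1 := by
    have := (le_div_iff₀ hL).mp hα1
    linarith
  have hLa2 : L * α ^ 2 ≤ α := by nlinarith
  have hng : (0:ℝ) ≤ ‖g‖ := norm_nonneg g
  have hnΔ : (0:ℝ) ≤ ‖Δ‖ := norm_nonneg Δ
  set n : ℝ := ‖g‖ with hndef
  set d : ℝ := ‖Δ‖ with hddef
  set c : ℝ := ⟪g, Δ⟫ with hcdef
  have h0 : (0:ℝ) ≤ α - L * α ^ 2 := by linarith
  have h1 : d ^ 2 ≤ (L * e) ^ 2 := by nlinarith
  have h2 : |c| ≤ n * (L * e) :=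
    (abs_real_inner_le_norm g Δ).trans (mul_le_mul_of_nonneg_left hΔ hng)
  have h3 : n * (L * e) ≤ n ^ 2 / 4 + (L * e) ^ 2 := by
    nlinarith [sq_nonneg (n - 2 * (L * e))]
  have h4 : (L * α ^ 2 - α) * c ≤ (α - L * α ^ 2) * |c| := by
    calc (L * α ^ 2 - α) * c = (α - L * α ^ 2) * (-c) := by ring
      _ ≤ (α - L * α ^ 2) * |c| := mul_le_mul_of_nonneg_left (neg_le_abs c) h0
  have h5 : (α - L * α ^ 2) * |c| ≤ α * |c| :=
    mul_le_mul_of_nonneg_right (by linarith [mul_nonneg hL.le (sq_nonneg α)]) (abs_nonneg c)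
  have h6 : α * |c| ≤ α * (n ^ 2 / 4 + (L * e) ^ 2) :=
    mul_le_mul_of_nonneg_left (h2.trans h3) hα0.le
  have h7 : (L * α ^ 2 / 2 - α) * n ^ 2 ≤ (α / 2 - α) * n ^ 2 :=
    mul_le_mul_of_nonneg_right (by linarith) (sq_nonneg n)
  have h8 : (L * α ^ 2 / 2) * d ^ 2 ≤ (L * α ^ 2 / 2) * (L * e) ^ 2 :=
    mul_le_mul_of_nonneg_left h1 (by positivity)
  calc G (x + v) - G x
      ≤ -α * (n ^ 2 + c) + L / 2 * (α ^ 2 * (n ^ 2 + 2 * c + d ^ 2)) := by linarith [hd]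
    _ = (L * α ^ 2 / 2 - α) * n ^ 2 + (L * α ^ 2 - α) * c + (L * α ^ 2 / 2) * d ^ 2 := by ring
    _ ≤ (α / 2 - α) * n ^ 2 + α * (n ^ 2 / 4 + (L * e) ^ 2) + (L * α ^ 2 / 2) * (L * e) ^ 2 := by
        linarith [h4, h5, h6, h7, h8]
    _ = -(α / 4) * n ^ 2 + ((L ^ 3 * α ^ 2) / 2 + L ^ 2 * α) * e ^ 2 := by ring
end

section
/- Let W be a real symmetric m×m matrix with -I ≺ W ⪯ I and V = θI + (1-θ)W with θ ∈ (0,1/2]. For ω an eigenvalue of W with ω ≠ 1, both roots of λ² - (1+ω)λ + (ω(1-θ) + θ) = 0 (real or complex) have modulus strictly less than 1; if ω = 1, the only root of the corresponding factor (counting the Schur-complement reduction of [[W,I],[W-V,I]]) is λ = 1. -/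
open Matrix

/-- Combined real/complex root case: for an eigenvalue ω ≠ 1 of W, both roots of
λ² - (1+ω)λ + (ω(1-θ)+θ) = 0 have modulus < 1; for ω = 1 the only root is λ = 1. -/
theorem stmt_19 {m : ℕ} (W : Matrix (Fin m) (Fin m) ℝ) (θ : ℝ)
    (hW : W.IsSymm)
    (hlow : (W + 1).PosDef) (hup : ((1 : Matrix (Fin m) (Fin m) ℝ) - W).PosSemidef)
    (hθ0 : 0 < θ) (hθ1 : θ ≤ 1/2)
    (V : Matrix (Fin m) (Fin m) ℝ)
    (hV : V = θ • (1 : Matrix (Fin m) (Fin m) ℝ) + (1 - θ) • W)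
    (ω : ℝ) (hω : ∃ v : Fin m → ℝ, v ≠ 0 ∧ W *ᵥ v = ω • v)
    (lam : ℂ)
    (hroot : lam ^ 2 - ((1 : ℂ) + (ω : ℂ)) * lam + ((ω : ℂ) * (1 - (θ : ℂ)) + (θ : ℂ)) = 0) :
    (ω ≠ 1 → ‖lam‖ < 1) ∧ (ω = 1 → lam = 1) := by
  obtain ⟨v, hv0, hvW⟩ := hω
  have hvnn : 0 ≤ v ⬝ᵥ v := Finset.sum_nonneg fun i _ => mul_self_nonneg (v i)
  have hvv : 0 < v ⬝ᵥ v :=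
    lt_of_le_of_ne hvnn (fun h => hv0 (dotProduct_self_eq_zero.mp h.symm))
  -- ω > -1
  have hlow' := hlow.dotProduct_mulVec_pos hv0
  have hωlow : -1 < ω := by
    have h1 : (W + 1) *ᵥ v = (ω + 1) • v := by
      simp [add_mulVec, hvW, one_mulVec, add_smul, one_smul]
    rw [h1] at hlow'
    simp only [star_trivial, dotProduct_smul, smul_eq_mul] at hlow'
    nlinarith
  -- ω ≤ 1
  have hup' := hup.dotProduct_mulVec_nonneg v
  have hωup : ω ≤ 1 := by
    have h1 : ((1 : Matrix (Fin m) (Fin m) ℝ) - W) *ᵥ v = (1 - ω) • v := by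
      simp [sub_mulVec, hvW, one_mulVec, sub_smul, one_smul]
    rw [h1] at hup'
    simp only [star_trivial, dotProduct_smul, smul_eq_mul] at hup'
    nlinarith
  -- extract real and imaginary parts of the root equation
  set a := lam.re with ha
  set b := lam.im with hb
  have hre : a * a - b * b - ((1 + ω) * a) + (ω * (1 - θ) + θ) = 0 := by
    have := congrArg Complex.re hroot
    simpa [pow_two, Complex.mul_re, Complex.mul_im, Complex.sub_re, Complex.add_re,
      Complex.ofReal_re, Complex.ofReal_im] using this
  have him : a * b + b * a - ((1 + ω) * b) = 0 := by
    have := congrArg Complex.im hroot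
    simpa [pow_two, Complex.mul_re, Complex.mul_im, Complex.sub_im, Complex.add_im,
      Complex.ofReal_re, Complex.ofReal_im] using this
  constructor
  · intro hne
    have hωlt : ω < 1 := lt_of_le_of_ne hωup hne
    have habs : ‖lam‖ ^ 2 = a * a + b * b := by
      rw [Complex.sq_norm, Complex.normSq_apply]
    have hsq : a * a + b * b < 1 := by
      rcases eq_or_ne b 0 with hb0 | hb0
      · -- real root: (a-1)(a-ω) = -θ(1-ω) < 0, hence ω < a < 1
        rw [hb0] at hre
        have key : (a - 1) * (a - ω) = -(θ * (1 - ω)) := by ring_nf; nlinarith [hre]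
        have hpos : 0 < θ * (1 - ω) := mul_pos hθ0 (by linarith)
        have ha1 : a < 1 := by nlinarith
        have haω : ω < a := by nlinarith
        rw [hb0]
        nlinarith
      · -- complex root: 2a = 1+ω and |λ|² = ω(1-θ)+θ < 1
        have h2a : 2 * a = 1 + ω := by
          have : b * (2 * a - (1 + ω)) = 0 := by linarith [him]
          rcases mul_eq_zero.mp this with h | h
          · exact absurd h hb0
          · linarith
        nlinarith [hre]
    have hnn := norm_nonneg lam
    nlinarith [habs]
  · intro h1
    subst h1
    have : (lam - 1) ^ 2 = 0 := by
      push_cast at hroot ⊢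
      linear_combination hroot
    have := pow_eq_zero_iff (n := 2) (by norm_num) |>.mp this
    exact sub_eq_zero.mp this
end
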